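/- Assumptions and notation as in the Section 4 construction: (W,S) is an irreducible Coxeter system of finite rank with m_{st} < ∞ for all s,t ∈ S, whose Coxeter graph G = (S,E) is not a tree, with fixed s_1, s_2 ∈ S such that m := m_{s_1s_2} ≥ 4; p : G′ → G is the universal covering of G with fixed edge {s_1′, s_2′} over {s_1, s_2}. Then the prescribed linear operators, one for each s ∈ S, on V := ⊕_{a∈S′} ℂ α_a define a representation of W on V; that is, each operator is an involution, the operator assigned to s and the operator assigned to t satisfy ((st)-operator)^{m_{st}} = id for all s,t ∈ S, and hence s ↦ (its operator) extends to a group homomorphism from W to GL(V). -/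

import Mathlib

/-- The Coxeter graph of a Coxeter matrix `M`: two distinct vertices `s, t` are adjacent iff
`M s t ≥ 3` or `M s t = ∞` (encoded as `0` in Mathlib), i.e. iff `M s t ≠ 2`. -/
def coxeterGraph {B : Type*} (M : CoxeterMatrix B) : SimpleGraph B where
  Adj s t := s ≠ t ∧ M s t ≠ 2
  symm := by
    constructor
    intro s t h
    exact ⟨h.1.symm, by rw [M.symmetric]; exact h.2⟩
  loopless := by constructor; intro s h; exact h.1 rfl

open Finsupp Classical in
/-- The Section 4 operators: for each `s ∈ S`, a linear operator on `V = ⊕_{a ∈ S′} ℂ α_a`,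
where `S′` is the vertex set of the universal covering `p : G′ → G` of the Coxeter graph `G`,
and `α_a = Finsupp.single a 1`.  Here `{s₁′, s₂′}` is the fixed edge of `G′` over the edge
`{s₁, s₂}` of `G` (with `m = m_{s₁s₂} ≥ 4`).  The defining formulas are:
(i) if `p a = s` then `s·α_a = −α_a`;
(ii) `s₁·α_{s₂′} = α_{s₂′} + 2cos(2π/m) α_{s₁′}` and `s₂·α_{s₁′} = α_{s₁′} + 2cos(2π/m) α_{s₂′}`;
(iii) otherwise, if `s` is not adjacent to `p a` in `G` (equivalently, under the covering
hypotheses, `a` has no neighbour in `G′` lying over `s`), then `s·α_a = α_a`;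
(iv) otherwise `s·α_a = α_a + 2cos(π/m_{s,p(a)}) α_b`, where `b` is the unique neighbour of `a`
in `G′` with `p b = s`. -/
noncomputable def sec4Act {B B' : Type*} (M : CoxeterMatrix B) (G' : SimpleGraph B')
    (p : B' → B) (s₁ s₂ : B) (s₁' s₂' : B') (s : B) : (B' →₀ ℂ) →ₗ[ℂ] (B' →₀ ℂ) :=
  Finsupp.lift _ ℂ _ fun a =>
    if p a = s then -single a 1
    else if s = s₁ ∧ a = s₂' then
      single s₂' 1 + (2 * Real.cos (2 * Real.pi / (M s₁ s₂ : ℝ)) : ℂ) • single s₁' 1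
    else if s = s₂ ∧ a = s₁' then
      single s₁' 1 + (2 * Real.cos (2 * Real.pi / (M s₁ s₂ : ℝ)) : ℂ) • single s₂' 1
    else if h : ∃ b, G'.Adj a b ∧ p b = s then
      single a 1 + (2 * Real.cos (Real.pi / (M s (p a) : ℝ)) : ℂ) • single h.choose 1
    else single a 1

/-- The subspace of vectors fixed by all the operators `σ s`. -/
def fixedSubmodule {B V : Type*} [AddCommGroup V] [Module ℂ V]
    (σ : B → V →ₗ[ℂ] V) : Submodule ℂ V where
  carrier := {v | ∀ s, σ s v = v}
  add_mem' := by
    intro a b ha hb s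
    simp [map_add, ha s, hb s]
  zero_mem' := by intro s; simp
  smul_mem' := by
    intro c a ha s
    simp [map_smul, ha s]



section Abstract
variable {V : Type*} [AddCommGroup V] [Module ℂ V]

lemma end_pow_fixed (T : V →ₗ[ℂ] V) (v : V) (h : T v = v) (n : ℕ) : (T ^ n) v = v := by
  induction n with
  | zero => simp
  | succ k ih => rw [pow_succ, Module.End.mul_apply, h, ih]

lemma end_pow_smul (T : V →ₗ[ℂ] V) (v : V) (z : ℂ) (h : T v = z • v) (n : ℕ) :
    (T ^ n) v = z ^ n • v := by
  induction n with
  | zero => simp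
  | succ k ih =>
    rw [pow_succ, Module.End.mul_apply, h, map_smul, ih, smul_smul, pow_succ]
    ring_nf

lemma pair_fix (A T : V →ₗ[ℂ] V) (u v : V) (c z : ℂ) (m : ℕ)
    (hz0 : z ≠ 0) (hz1 : z ^ 2 ≠ 1) (hzm : z ^ (2 * m) = 1) (hc : c = z + z⁻¹)
    (hAu : A u = -u) (hAv : A v = v + c • u) (hTv : T v = -v) (hTu : T u = u + c • v) :
    ((A * T) ^ m) u = u ∧ ((A * T) ^ m) v = v := by
  subst hc
  have hzz : z * z⁻¹ = 1 := mul_inv_cancel₀ hz0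
  have hne : z - z⁻¹ ≠ 0 := by
    intro h
    apply hz1
    have h2 : z = z⁻¹ := by linear_combination h
    calc z ^ 2 = z * z := sq z
      _ = z * z⁻¹ := by rw [← h2]
      _ = 1 := hzz
  set f₁ := z • u + v with hf₁
  set f₂ := z⁻¹ • u + v with hf₂
  have h₁ : (A * T) f₁ = (z ^ 2) • f₁ := by
    rw [hf₁, Module.End.mul_apply]
    simp only [map_add, map_smul, map_neg, hTu, hTv, hAu, hAv]
    match_scalars <;> (field_simp; ring)
  have h₂ : (A * T) f₂ = (z⁻¹ ^ 2) • f₂ := by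
    rw [hf₂, Module.End.mul_apply]
    simp only [map_add, map_smul, map_neg, hTu, hTv, hAu, hAv]
    match_scalars <;> (field_simp; ring)
  have hfix₁ : ((A * T) ^ m) f₁ = f₁ := by
    rw [end_pow_smul _ _ _ h₁ m, ← pow_mul, hzm, one_smul]
  have hfix₂ : ((A * T) ^ m) f₂ = f₂ := by
    rw [end_pow_smul _ _ _ h₂ m, inv_pow, inv_pow, ← pow_mul, hzm, inv_one, one_smul]
  have hu : u = (z - z⁻¹)⁻¹ • (f₁ - f₂) := by
    have h3 : f₁ - f₂ = (z - z⁻¹) • u := by rw [hf₁, hf₂]; module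
    rw [h3, smul_smul, inv_mul_cancel₀ hne, one_smul]
  have hv : v = (z - z⁻¹)⁻¹ • (z • f₂ - z⁻¹ • f₁) := by
    have h3 : z • f₂ - z⁻¹ • f₁ = (z - z⁻¹) • v := by
      rw [hf₁, hf₂]
      match_scalars
      · field_simp
        ring
      · ring
    rw [h3, smul_smul, inv_mul_cancel₀ hne, one_smul]
  constructor
  · rw [hu, map_smul, map_sub, hfix₁, hfix₂]
  · rw [hv, map_smul, map_sub, map_smul, map_smul, hfix₁, hfix₂]

end Abstract


open Complex in
lemma zmaster (θ : ℝ) (k m : ℕ) (hθ : θ = k * Real.pi / m) (h1 : 1 ≤ k) (h2 : k < m) :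
    ∃ z : ℂ, z ≠ 0 ∧ z ^ 2 ≠ 1 ∧ z ^ (2 * m) = 1 ∧ 2 * (Real.cos θ : ℂ) = z + z⁻¹ := by
  have hm0 : (m : ℝ) ≠ 0 := Nat.cast_ne_zero.mpr (by omega)
  have hm0' : (m : ℂ) ≠ 0 := Nat.cast_ne_zero.mpr (by omega)
  refine ⟨Complex.exp (θ * Complex.I), Complex.exp_ne_zero _, ?_, ?_, ?_⟩
  · rw [← Complex.exp_nat_mul, Ne, Complex.exp_eq_one_iff]
    rintro ⟨n, hn⟩
    have h3 : ((2 * θ : ℝ) : ℂ) * Complex.I = ((n * (2 * Real.pi) : ℝ) : ℂ) * Complex.I := by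
      push_cast
      linear_combination hn
    have h4 : (2 * θ : ℝ) = n * (2 * Real.pi) := by
      exact_mod_cast mul_right_cancel₀ Complex.I_ne_zero h3
    rw [hθ] at h4
    have h5 : (k : ℝ) = n * m := by
      have hpi := Real.pi_ne_zero
      field_simp at h4
      nlinarith [Real.pi_pos, h4]
    have hmpos : (0 : ℝ) < m := by positivity
    have hk1 : (1 : ℝ) ≤ (k : ℝ) := by exact_mod_cast h1
    have hkm : (k : ℝ) < (m : ℝ) := by exact_mod_cast h2
    rcases le_or_gt (n : ℝ) 0 with hn0 | hn0
    · nlinarith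
    · have hn1 : (1 : ℤ) ≤ n := by exact_mod_cast hn0
      have : (1 : ℝ) ≤ (n : ℝ) := by exact_mod_cast hn1
      nlinarith
  · rw [← Complex.exp_nat_mul, Complex.exp_eq_one_iff]
    refine ⟨k, ?_⟩
    rw [hθ]
    push_cast
    field_simp
  · rw [← Complex.exp_neg]
    have hneg : -((θ : ℂ) * Complex.I) = ((-θ : ℝ) : ℂ) * Complex.I := by push_cast; ring
    rw [hneg, Complex.exp_mul_I, Complex.exp_mul_I]
    push_cast
    simp [Complex.cos_neg, Complex.sin_neg]
    ring



namespace Sec4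
open Finsupp Classical

variable {B B' : Type*} {M : CoxeterMatrix B} {G' : SimpleGraph B'} {p : B' → B}
  {s₁ s₂ : B} {s₁' s₂' : B'}

local notation "σ" => sec4Act M G' p s₁ s₂ s₁' s₂'

lemma app (s : B) (a : B') :
    σ s (single a 1) =
    (if p a = s then -single a 1
    else if s = s₁ ∧ a = s₂' then
      single s₂' 1 + (2 * Real.cos (2 * Real.pi / (M s₁ s₂ : ℝ)) : ℂ) • single s₁' 1
    else if s = s₂ ∧ a = s₁' then
      single s₁' 1 + (2 * Real.cos (2 * Real.pi / (M s₁ s₂ : ℝ)) : ℂ) • single s₂' 1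
    else if h : ∃ b, G'.Adj a b ∧ p b = s then
      single a 1 + (2 * Real.cos (Real.pi / (M s (p a) : ℝ)) : ℂ) • single h.choose 1
    else single a 1) := by
  rw [sec4Act, Finsupp.lift_apply, Finsupp.sum_single_index (by simp), one_smul]

lemma app_diag {s : B} {a : B'} (h : p a = s) : σ s (single a 1) = -single a 1 := by
  rw [app, if_pos h]

lemma app_sp₁ (h : p s₂' ≠ s₁) :
    σ s₁ (single s₂' 1) =
      single s₂' 1 + (2 * Real.cos (2 * Real.pi / (M s₁ s₂ : ℝ)) : ℂ) • single s₁' 1 := by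
  rw [app, if_neg h, if_pos ⟨rfl, rfl⟩]

lemma app_sp₂ (h : p s₁' ≠ s₂) (h12 : s₂ ≠ s₁ ∨ s₁' ≠ s₂') :
    σ s₂ (single s₁' 1) =
      single s₁' 1 + (2 * Real.cos (2 * Real.pi / (M s₁ s₂ : ℝ)) : ℂ) • single s₂' 1 := by
  rw [app, if_neg h, if_neg (by rintro ⟨h1, h2⟩; rcases h12 with h' | h' <;> exact h' (by tauto)),
    if_pos ⟨rfl, rfl⟩]

variable (hcover : ∀ a : B', Set.BijOn p (G'.neighborSet a) ((coxeterGraph M).neighborSet (p a)))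

include hcover in
lemma nbr_unique {a b b' : B'} (hb : G'.Adj a b) (hb' : G'.Adj a b') (hp : p b = p b') :
    b = b' :=
  (hcover a).injOn hb hb' hp

include hcover in
lemma app_nbr {s : B} {a u : B'} (h1 : p a ≠ s) (h2 : ¬(s = s₁ ∧ a = s₂'))
    (h3 : ¬(s = s₂ ∧ a = s₁')) (hu : G'.Adj a u) (hpu : p u = s) :
    σ s (single a 1) =
      single a 1 + (2 * Real.cos (Real.pi / (M s (p a) : ℝ)) : ℂ) • single u 1 := by
  have hex : ∃ b, G'.Adj a b ∧ p b = s := ⟨u, hu, hpu⟩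
  rw [app, if_neg h1, if_neg h2, if_neg h3, dif_pos hex]
  have hch : hex.choose = u :=
    nbr_unique hcover hex.choose_spec.1 hu (hex.choose_spec.2.trans hpu.symm)
  rw [hch]

include hcover in
lemma exists_nbr (a : B') (s : B) (h : (coxeterGraph M).Adj (p a) s) :
    ∃ b, G'.Adj a b ∧ p b = s := by
  obtain ⟨b, hb, hpb⟩ := (hcover a).surjOn h
  exact ⟨b, hb, hpb⟩

variable (hedge : G'.Adj s₁' s₂') (hp₁ : p s₁' = s₁) (hp₂ : p s₂' = s₂)

include hedge hp₁ hp₂ in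
lemma app_no_nbr {s : B} {a : B'} (h1 : p a ≠ s) (h4 : ¬∃ b, G'.Adj a b ∧ p b = s) :
    σ s (single a 1) = single a 1 := by
  rw [app, if_neg h1,
    if_neg (by rintro ⟨hs, ha⟩; exact h4 ⟨s₁', ha ▸ hedge.symm, hp₁.trans hs.symm⟩),
    if_neg (by rintro ⟨hs, ha⟩; exact h4 ⟨s₂', ha ▸ hedge, hp₂.trans hs.symm⟩),
    dif_neg h4]

include hcover hedge hp₁ hp₂ in
lemma app_nbr' {s : B} {a u : B'} (h1 : p a ≠ s) (hu : G'.Adj a u) (hpu : p u = s) :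
    ∃ γ : ℂ, σ s (single a 1) = single a 1 + γ • single u 1 := by
  by_cases h2 : s = s₁ ∧ a = s₂'
  · obtain ⟨hs, ha⟩ := h2
    have hb : u = s₁' := nbr_unique hcover hu (by rw [ha]; exact hedge.symm)
      (by rw [hpu, hs, hp₁])
    refine ⟨(2 * Real.cos (2 * Real.pi / (M s₁ s₂ : ℝ)) : ℂ), ?_⟩
    rw [hs, ha, hb]
    exact app_sp₁ (by rw [← ha, ← hs]; exact h1)
  · by_cases h3 : s = s₂ ∧ a = s₁'
    · obtain ⟨hs, ha⟩ := h3
      have hb : u = s₂' := nbr_unique hcover hu (by rw [ha]; exact hedge)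
        (by rw [hpu, hs, hp₂])
      refine ⟨(2 * Real.cos (2 * Real.pi / (M s₁ s₂ : ℝ)) : ℂ), ?_⟩
      rw [hs, ha, hb]
      exact app_sp₂ (by rw [← ha, ← hs]; exact h1)
        (Or.inr (fun hcon => G'.loopless.irrefl s₂' (hcon ▸ hedge)))
    · exact ⟨_, app_nbr hcover h1 h2 h3 hu hpu⟩


variable (hmorph : ∀ a b : B', G'.Adj a b → (coxeterGraph M).Adj (p a) (p b))
  (hfin : ∀ s t : B, M s t ≠ 0) (hm4 : 4 ≤ M s₁ s₂)

include hcover hedge hp₁ hp₂ hmorph hfin hm4 in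
lemma pairData {s t : B} (hst : s ≠ t) {u v : B'} (huv : G'.Adj u v)
    (hpu : p u = s) (hpv : p v = t) :
    ∃ c z : ℂ, z ≠ 0 ∧ z ^ 2 ≠ 1 ∧ z ^ (2 * M s t) = 1 ∧ c = z + z⁻¹ ∧
      σ t (single u 1) = single u 1 + c • single v 1 ∧
      σ s (single v 1) = single v 1 + c • single u 1 := by
  have hadj : (coxeterGraph M).Adj s t := by rw [← hpu, ← hpv]; exact hmorph u v huv
  have hm3 : 3 ≤ M s t := by
    have h0 := hfin s t
    have h1' := M.off_diagonal s t hst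
    have h2' := hadj.2
    omega
  have hput : p u ≠ t := by rw [hpu]; exact hst
  have hpvs : p v ≠ s := by rw [hpv]; exact fun h => hst h.symm
  by_cases h1 : t = s₁ ∧ u = s₂'
  · obtain ⟨ht, hu⟩ := h1
    have hs : s = s₂ := by rw [← hpu, hu, hp₂]
    have hv : v = s₁' := nbr_unique hcover huv (by rw [hu]; exact hedge.symm)
      (by rw [hpv, ht, hp₁])
    have hMst : M s t = M s₁ s₂ := by rw [hs, ht, M.symmetric]
    obtain ⟨z, hz0, hz1, hzm, hc⟩ := zmaster (2 * Real.pi / (M s₁ s₂ : ℝ)) 2 (M s₁ s₂)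
      (by push_cast; ring) (by omega) (by omega)
    refine ⟨(2 * Real.cos (2 * Real.pi / (M s₁ s₂ : ℝ)) : ℂ), z, hz0, hz1,
      by rw [hMst]; exact hzm, hc, ?_, ?_⟩
    · rw [ht, hu, hv]
      exact app_sp₁ (fun hcon => hst (by rw [hs, ht, ← hcon]; exact hp₂.symm))
    · rw [hs, hv, hu]
      exact app_sp₂ (fun hcon => hst (by rw [hs, ht, ← hcon]; exact hp₁))
        (Or.inr hedge.ne)
  · by_cases h2 : t = s₂ ∧ u = s₁'
    · obtain ⟨ht, hu⟩ := h2
      have hs : s = s₁ := by rw [← hpu, hu, hp₁]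
      have hv : v = s₂' := nbr_unique hcover huv (by rw [hu]; exact hedge)
        (by rw [hpv, ht, hp₂])
      have hMst : M s t = M s₁ s₂ := by rw [hs, ht]
      obtain ⟨z, hz0, hz1, hzm, hc⟩ := zmaster (2 * Real.pi / (M s₁ s₂ : ℝ)) 2 (M s₁ s₂)
        (by push_cast; ring) (by omega) (by omega)
      refine ⟨(2 * Real.cos (2 * Real.pi / (M s₁ s₂ : ℝ)) : ℂ), z, hz0, hz1,
        by rw [hMst]; exact hzm, hc, ?_, ?_⟩
      · rw [ht, hu, hv]
        exact app_sp₂ (fun hcon => hst (by rw [hs, ht, ← hcon]; exact hp₁.symm))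
          (Or.inr hedge.ne)
      · rw [hs, hv, hu]
        exact app_sp₁ (fun hcon => hst (by rw [hs, ht, ← hcon]; exact hp₂))
    · have h3 : ¬(s = s₁ ∧ v = s₂') := by
        rintro ⟨hs, hv⟩
        have ht : t = s₂ := by rw [← hpv, hv, hp₂]
        have hu' : u = s₁' := nbr_unique hcover huv.symm (by rw [hv]; exact hedge.symm)
          (by rw [hpu, hs, hp₁])
        exact h2 ⟨ht, hu'⟩
      have h4 : ¬(s = s₂ ∧ v = s₁') := by
        rintro ⟨hs, hv⟩
        have ht : t = s₁ := by rw [← hpv, hv, hp₁]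
        have hu' : u = s₂' := nbr_unique hcover huv.symm (by rw [hv]; exact hedge)
          (by rw [hpu, hs, hp₂])
        exact h1 ⟨ht, hu'⟩
      obtain ⟨z, hz0, hz1, hzm, hc⟩ := zmaster (Real.pi / (M s t : ℝ)) 1 (M s t)
        (by push_cast; ring) le_rfl (by omega)
      refine ⟨(2 * Real.cos (Real.pi / (M s t : ℝ)) : ℂ), z, hz0, hz1, hzm, hc, ?_, ?_⟩
      · rw [app_nbr hcover hput h1 h2 huv hpv, hpu, M.symmetric t s]
      · rw [app_nbr hcover hpvs h3 h4 huv.symm hpu, hpv]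

include hcover hedge hp₁ hp₂ hmorph hfin hm4 in
lemma pair_good {s t : B} (hst : s ≠ t) {u v : B'} (huv : G'.Adj u v)
    (hpu : p u = s) (hpv : p v = t) :
    ((σ s * σ t) ^ M s t) (single u 1) = single u 1 ∧
    ((σ s * σ t) ^ M s t) (single v 1) = single v 1 := by
  obtain ⟨c, z, hz0, hz1, hzm, hc, hTu, hSv⟩ :=
    pairData hcover hedge hp₁ hp₂ hmorph hfin hm4 hst huv hpu hpv
  exact pair_fix (σ s) (σ t) (single u 1) (single v 1) c z (M s t) hz0 hz1 hzm hc
    (app_diag hpu) hSv (app_diag hpv) hTu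


include hcover hedge hp₁ hp₂ hmorph hfin hm4 in
lemma side_s {s t : B} (hst : s ≠ t) {a : B'} (has : p a ≠ s) (hat : p a ≠ t) :
    ∃ w, σ s w = w - (σ s (single a 1) - single a 1) ∧ σ t w = w ∧
      ((σ s * σ t) ^ M s t) w = w := by
  by_cases hnb : ∃ b, G'.Adj a b ∧ p b = s
  · obtain ⟨u, hu, hpu⟩ := hnb
    obtain ⟨γ, hγ⟩ := app_nbr' hcover hedge hp₁ hp₂ has hu hpu
    by_cases hm2 : M s t = 2
    · have hsu : σ s (single u 1) = -single u 1 := app_diag hpu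
      have hnotadj : ¬(coxeterGraph M).Adj s t := fun h => h.2 hm2
      have htu : σ t (single u 1) = single u 1 := by
        refine app_no_nbr hedge hp₁ hp₂ (by rw [hpu]; exact hst) ?_
        rintro ⟨b, hb, hpb⟩
        exact hnotadj (by rw [← hpu, ← hpb]; exact hmorph u b hb)
      refine ⟨(γ / 2) • single u 1, ?_, ?_, ?_⟩
      · rw [map_smul, hsu, hγ]
        module
      · rw [map_smul, htu]
      · have hprod : (σ s * σ t) (single u 1) = -single u 1 := by
          rw [Module.End.mul_apply, htu, hsu]
        have hsq : ((σ s * σ t) ^ M s t) (single u 1) = single u 1 := by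
          rw [hm2, sq, Module.End.mul_apply, hprod, map_neg, hprod, neg_neg]
        rw [map_smul, hsq]
    · have hadj : (coxeterGraph M).Adj s t := ⟨hst, hm2⟩
      obtain ⟨v, huv, hpv⟩ := exists_nbr hcover u t (by rw [hpu]; exact hadj)
      obtain ⟨c, z, hz0, hz1, hzm, hc, hTu, hSv⟩ :=
        pairData hcover hedge hp₁ hp₂ hmorph hfin hm4 hst huv hpu hpv
      have hSu : σ s (single u 1) = -single u 1 := app_diag hpu
      have hTv : σ t (single v 1) = -single v 1 := app_diag hpv
      have hfix := pair_fix (σ s) (σ t) (single u 1) (single v 1) c z (M s t)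
        hz0 hz1 hzm hc hSu hSv hTv hTu
      have hzz : z * z⁻¹ = 1 := mul_inv_cancel₀ hz0
      have hne : z - z⁻¹ ≠ 0 := by
        intro h
        apply hz1
        have h2 : z = z⁻¹ := by linear_combination h
        calc z ^ 2 = z * z := sq z
          _ = z * z⁻¹ := by rw [← h2]
          _ = 1 := hzz
      have hd : 4 - c ^ 2 ≠ 0 := by
        intro h
        rw [hc] at h
        apply hne
        refine pow_eq_zero_iff (n := 2) (by norm_num) |>.mp ?_
        linear_combination -h - 4 * hzz
      refine ⟨(2 * γ / (4 - c ^ 2)) • single u 1 + (c * γ / (4 - c ^ 2)) • single v 1,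
        ?_, ?_, ?_⟩
      · rw [map_add, map_smul, map_smul, hSu, hSv, hγ]
        match_scalars
        · field_simp
          ring
        · field_simp
        · ring
      · rw [map_add, map_smul, map_smul, hTu, hTv]
        match_scalars
        · field_simp
        · field_simp
          ring
      · rw [map_add, map_smul, map_smul, hfix.1, hfix.2]
  · have h0 : σ s (single a 1) = single a 1 := app_no_nbr hedge hp₁ hp₂ has hnb
    exact ⟨0, by simp [h0], by simp, by simp⟩

include hcover hedge hp₁ hp₂ hmorph hfin hm4 in
lemma side_t {s t : B} (hst : s ≠ t) {a : B'} (has : p a ≠ s) (hat : p a ≠ t) :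
    ∃ w, σ t w = w - (σ t (single a 1) - single a 1) ∧ σ s w = w ∧
      ((σ s * σ t) ^ M s t) w = w := by
  by_cases hnb : ∃ b, G'.Adj a b ∧ p b = t
  · obtain ⟨u, hu, hpu⟩ := hnb
    obtain ⟨γ, hγ⟩ := app_nbr' hcover hedge hp₁ hp₂ hat hu hpu
    by_cases hm2 : M s t = 2
    · have htu : σ t (single u 1) = -single u 1 := app_diag hpu
      have hnotadj : ¬(coxeterGraph M).Adj s t := fun h => h.2 hm2
      have hsu : σ s (single u 1) = single u 1 := by
        refine app_no_nbr hedge hp₁ hp₂ (by rw [hpu]; exact fun h => hst h.symm) ?_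
        rintro ⟨b, hb, hpb⟩
        exact hnotadj ((by rw [← hpu, ← hpb]; exact hmorph u b hb) :
          (coxeterGraph M).Adj t s).symm
      refine ⟨(γ / 2) • single u 1, ?_, ?_, ?_⟩
      · rw [map_smul, htu, hγ]
        module
      · rw [map_smul, hsu]
      · have hprod : (σ s * σ t) (single u 1) = -single u 1 := by
          rw [Module.End.mul_apply, htu, map_neg, hsu]
        have hsq : ((σ s * σ t) ^ M s t) (single u 1) = single u 1 := by
          rw [hm2, sq, Module.End.mul_apply, hprod, map_neg, hprod, neg_neg]
        rw [map_smul, hsq]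
    · have hadj : (coxeterGraph M).Adj s t := ⟨hst, hm2⟩
      obtain ⟨v, huv, hpv⟩ := exists_nbr hcover u s (by rw [hpu]; exact hadj.symm)
      obtain ⟨c, z, hz0, hz1, hzm, hc, hTv, hSu⟩ :=
        pairData hcover hedge hp₁ hp₂ hmorph hfin hm4 hst huv.symm hpv hpu
      -- hTv : σ t (single v 1) = single v 1 + c • single u 1
      -- hSu : σ s (single u 1) = single u 1 + c • single v 1
      have hTu : σ t (single u 1) = -single u 1 := app_diag hpu
      have hSv : σ s (single v 1) = -single v 1 := app_diag hpv
      have hfix := pair_fix (σ s) (σ t) (single v 1) (single u 1) c z (M s t)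
        hz0 hz1 hzm hc hSv hSu hTu hTv
      have hzz : z * z⁻¹ = 1 := mul_inv_cancel₀ hz0
      have hne : z - z⁻¹ ≠ 0 := by
        intro h
        apply hz1
        have h2 : z = z⁻¹ := by linear_combination h
        calc z ^ 2 = z * z := sq z
          _ = z * z⁻¹ := by rw [← h2]
          _ = 1 := hzz
      have hd : 4 - c ^ 2 ≠ 0 := by
        intro h
        rw [hc] at h
        apply hne
        refine pow_eq_zero_iff (n := 2) (by norm_num) |>.mp ?_
        linear_combination -h - 4 * hzz
      refine ⟨(2 * γ / (4 - c ^ 2)) • single u 1 + (c * γ / (4 - c ^ 2)) • single v 1,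
        ?_, ?_, ?_⟩
      · rw [map_add, map_smul, map_smul, hTu, hTv, hγ]
        match_scalars
        · field_simp
          ring
        · field_simp
        · ring
      · rw [map_add, map_smul, map_smul, hSu, hSv]
        match_scalars
        · field_simp
        · field_simp
          ring
      · rw [map_add, map_smul, map_smul, hfix.2, hfix.1]
  · have h0 : σ t (single a 1) = single a 1 := app_no_nbr hedge hp₁ hp₂ hat hnb
    exact ⟨0, by simp [h0], by simp, by simp⟩


include hcover hedge hp₁ hp₂ hmorph hfin hm4 in
lemma good_single (s t : B) (hst : s ≠ t) (a : B') :
    ((σ s * σ t) ^ M s t) (single a 1) = single a 1 := by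
  by_cases hpa : p a = s
  · by_cases hm2 : M s t = 2
    · have hS : σ s (single a 1) = -single a 1 := app_diag hpa
      have hnotadj : ¬(coxeterGraph M).Adj s t := fun h => h.2 hm2
      have hT : σ t (single a 1) = single a 1 := by
        refine app_no_nbr hedge hp₁ hp₂ (by rw [hpa]; exact hst) ?_
        rintro ⟨b, hb, hpb⟩
        exact hnotadj (by rw [← hpa, ← hpb]; exact hmorph a b hb)
      have hprod : (σ s * σ t) (single a 1) = -single a 1 := by
        rw [Module.End.mul_apply, hT, hS]
      rw [hm2, sq, Module.End.mul_apply, hprod, map_neg, hprod, neg_neg]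
    · obtain ⟨v, hav, hpv⟩ := exists_nbr hcover a t (by rw [hpa]; exact ⟨hst, hm2⟩)
      exact (pair_good hcover hedge hp₁ hp₂ hmorph hfin hm4 hst hav hpa hpv).1
  · by_cases hpat : p a = t
    · by_cases hm2 : M s t = 2
      · have hT : σ t (single a 1) = -single a 1 := app_diag hpat
        have hnotadj : ¬(coxeterGraph M).Adj s t := fun h => h.2 hm2
        have hS : σ s (single a 1) = single a 1 := by
          refine app_no_nbr hedge hp₁ hp₂ hpa ?_
          rintro ⟨b, hb, hpb⟩
          exact hnotadj (((by rw [← hpat, ← hpb]; exact hmorph a b hb) :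
            (coxeterGraph M).Adj t s).symm)
        have hprod : (σ s * σ t) (single a 1) = -single a 1 := by
          rw [Module.End.mul_apply, hT, map_neg, hS]
        rw [hm2, sq, Module.End.mul_apply, hprod, map_neg, hprod, neg_neg]
      · obtain ⟨v, hav, hpv⟩ := exists_nbr hcover a s
          (by rw [hpat]; exact SimpleGraph.Adj.symm (G := coxeterGraph M) ⟨hst, hm2⟩)
        exact (pair_good hcover hedge hp₁ hp₂ hmorph hfin hm4 hst hav.symm hpv hpat).2
    · obtain ⟨ws, hws1, hws2, hws3⟩ :=
        side_s hcover hedge hp₁ hp₂ hmorph hfin hm4 hst hpa hpat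
      obtain ⟨wt, hwt1, hwt2, hwt3⟩ :=
        side_t hcover hedge hp₁ hp₂ hmorph hfin hm4 hst hpa hpat
      have hSw : σ s (single a 1 + ws + wt) = single a 1 + ws + wt := by
        rw [map_add, map_add, hws1, hwt2]
        abel
      have hTw : σ t (single a 1 + ws + wt) = single a 1 + ws + wt := by
        rw [map_add, map_add, hws2, hwt1]
        abel
      have hprod : (σ s * σ t) (single a 1 + ws + wt) = single a 1 + ws + wt := by
        rw [Module.End.mul_apply, hTw, hSw]
      have hw := end_pow_fixed _ _ hprod (M s t)
      have hsplit : (single a 1 : B' →₀ ℂ) = (single a 1 + ws + wt) - ws - wt := by abel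
      rw [hsplit, map_sub, map_sub, hw, hws3, hwt3]

include hcover hedge hp₁ hp₂ in
lemma invol_single (s : B) (a : B') : σ s (σ s (single a 1)) = single a 1 := by
  by_cases hpa : p a = s
  · rw [app_diag hpa, map_neg, app_diag hpa, neg_neg]
  · by_cases hnb : ∃ b, G'.Adj a b ∧ p b = s
    · obtain ⟨u, hu, hpu⟩ := hnb
      obtain ⟨γ, hγ⟩ := app_nbr' hcover hedge hp₁ hp₂ hpa hu hpu
      rw [hγ, map_add, map_smul, hγ, app_diag hpu]
      module
    · rw [app_no_nbr hedge hp₁ hp₂ hpa hnb, app_no_nbr hedge hp₁ hp₂ hpa hnb]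

lemma end_eq_one {T : (B' →₀ ℂ) →ₗ[ℂ] (B' →₀ ℂ)} (h : ∀ a, T (single a 1) = single a 1) :
    T = 1 := by
  refine Finsupp.lhom_ext fun a b => ?_
  have hb : (single a b : B' →₀ ℂ) = b • single a 1 := by
    rw [smul_single, smul_eq_mul, mul_one]
  rw [hb, map_smul, h a, Module.End.one_apply]

include hcover hedge hp₁ hp₂ hmorph hfin hm4 in
lemma key : ∀ s t : B, (σ s * σ t) ^ M s t = 1 := by
  intro s t
  by_cases hst : s = t
  · subst hst
    rw [M.diagonal, pow_one]
    refine end_eq_one fun a => ?_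
    rw [Module.End.mul_apply]
    exact invol_single hcover hedge hp₁ hp₂ s a
  · exact end_eq_one fun a => good_single hcover hedge hp₁ hp₂ hmorph hfin hm4 s t hst a

end Sec4


/-- under the Section 4 assumptions, the operators `sec4Act M G' p s₁ s₂ s₁' s₂' s`
define a representation of `W` on `V = B' →₀ ℂ`: each is an involution, the product of the
operators of `s` and `t` has order dividing `m_{st}`, and hence `s ↦ (its operator)` extends to
a group homomorphism `W → GL(V)`, i.e. to a representation of `W`. -/
theorem statement5 {B B' W : Type*} [Group W] [Fintype B]
    (M : CoxeterMatrix B) (cs : CoxeterSystem M W)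
    (hfin : ∀ s t : B, M s t ≠ 0)
    (hconn : (coxeterGraph M).Connected)
    (hnottree : ¬ (coxeterGraph M).IsTree)
    (s₁ s₂ : B) (hm : 4 ≤ M s₁ s₂)
    (G' : SimpleGraph B') (htree : G'.IsTree) (p : B' → B)
    (hmorph : ∀ a b : B', G'.Adj a b → (coxeterGraph M).Adj (p a) (p b))
    (hsurj : Function.Surjective p)
    (hcover : ∀ a : B', Set.BijOn p (G'.neighborSet a) ((coxeterGraph M).neighborSet (p a)))
    (s₁' s₂' : B') (hedge : G'.Adj s₁' s₂') (hp₁ : p s₁' = s₁) (hp₂ : p s₂' = s₂) :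
    (∀ s : B, sec4Act M G' p s₁ s₂ s₁' s₂' s * sec4Act M G' p s₁ s₂ s₁' s₂' s = 1) ∧
    (∀ s t : B, (sec4Act M G' p s₁ s₂ s₁' s₂' s * sec4Act M G' p s₁ s₂ s₁' s₂' t) ^ (M s t) = 1) ∧
    ∃ ρ : Representation ℂ W (B' →₀ ℂ),
      ∀ s : B, ρ (cs.simple s) = sec4Act M G' p s₁ s₂ s₁' s₂' s := by
  have key := Sec4.key hcover hedge hp₁ hp₂ hmorph hfin hm
  refine ⟨fun s => ?_, key, ⟨cs.lift ⟨_, key⟩, fun s => cs.lift_apply_simple key s⟩⟩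
  have h := key s s
  rwa [M.diagonal, pow_one] at h
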